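/- Let H(λ) = I₈ + λ⁻¹H₁ + λ⁻²H₂ where H₁ = [[0, f, 0], [0, 0, -f^♯], [0, 0, 0]] and H₂ = [[0, 0, g], [0, 0, 0], [0, 0, 0]] in 2+4+2 block form, with f a 2×4 matrix, f^♯ = J₄ fᵗ J₂, and g a 2×2 matrix satisfying g' = -f·f̌^♯ where f' = f̌ and f(0) = 0, g(0) = 0 for matrices f̌ of holomorphic functions. Then H⁻¹ dH = λ⁻¹ [[0, f̌, 0], [0, 0, -f̌^♯], [0, 0, 0]] dz. -/

import Mathlib

open Matrix

/-- Index type for the 2+4+2 block structure of 8×8 matrices. -/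
abbrev Idx8 := Fin 2 ⊕ (Fin 4 ⊕ Fin 2)

/-- Assemble an 8×8 matrix from nine blocks in the 2+4+2 partition. -/
def blk (A11 : Matrix (Fin 2) (Fin 2) ℂ) (A12 : Matrix (Fin 2) (Fin 4) ℂ)
    (A13 : Matrix (Fin 2) (Fin 2) ℂ)
    (A21 : Matrix (Fin 4) (Fin 2) ℂ) (A22 : Matrix (Fin 4) (Fin 4) ℂ)
    (A23 : Matrix (Fin 4) (Fin 2) ℂ)
    (A31 : Matrix (Fin 2) (Fin 2) ℂ) (A32 : Matrix (Fin 2) (Fin 4) ℂ)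
    (A33 : Matrix (Fin 2) (Fin 2) ℂ) : Matrix Idx8 Idx8 ℂ :=
  Matrix.of fun i j =>
    match i, j with
    | .inl i, .inl j => A11 i j
    | .inl i, .inr (.inl j) => A12 i j
    | .inl i, .inr (.inr j) => A13 i j
    | .inr (.inl i), .inl j => A21 i j
    | .inr (.inl i), .inr (.inl j) => A22 i j
    | .inr (.inl i), .inr (.inr j) => A23 i j
    | .inr (.inr i), .inl j => A31 i j
    | .inr (.inr i), .inr (.inl j) => A32 i j
    | .inr (.inr i), .inr (.inr j) => A33 i j

/-- The `n×n` anti-diagonal matrix of ones. -/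
def Jmat (n : ℕ) : Matrix (Fin n) (Fin n) ℂ :=
  Matrix.of fun i j => if (i : ℕ) + (j : ℕ) = n - 1 then 1 else 0

/-- `f^♯ = J₄ fᵀ J₂` for a 2×4 matrix `f`. -/
noncomputable def sharp (f : Matrix (Fin 2) (Fin 4) ℂ) : Matrix (Fin 4) (Fin 2) ℂ :=
  Jmat 4 * fᵀ * Jmat 2

/-- `H(λ) = I₈ + λ⁻¹H₁ + λ⁻²H₂`. -/
noncomputable def Hloop (lam : ℂ) (f : ℂ → Matrix (Fin 2) (Fin 4) ℂ)
    (g : ℂ → Matrix (Fin 2) (Fin 2) ℂ) (z : ℂ) : Matrix Idx8 Idx8 ℂ :=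
  1 + lam⁻¹ • blk 0 (f z) 0 0 0 (-(sharp (f z))) 0 0 0
    + (lam⁻¹) ^ 2 • blk 0 0 (g z) 0 0 0 0 0 0

-- auxiliary lemmas
lemma blk_mul (A11 A13 A31 A33 B11 B13 B31 B33 : Matrix (Fin 2) (Fin 2) ℂ)
    (A12 A32 B12 B32 : Matrix (Fin 2) (Fin 4) ℂ)
    (A21 A23 B21 B23 : Matrix (Fin 4) (Fin 2) ℂ)
    (A22 B22 : Matrix (Fin 4) (Fin 4) ℂ) :
    blk A11 A12 A13 A21 A22 A23 A31 A32 A33 * blk B11 B12 B13 B21 B22 B23 B31 B32 B33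
      = blk (A11*B11 + A12*B21 + A13*B31) (A11*B12 + A12*B22 + A13*B32) (A11*B13 + A12*B23 + A13*B33)
            (A21*B11 + A22*B21 + A23*B31) (A21*B12 + A22*B22 + A23*B32) (A21*B13 + A22*B23 + A23*B33)
            (A31*B11 + A32*B21 + A33*B31) (A31*B12 + A32*B22 + A33*B32) (A31*B13 + A32*B23 + A33*B33) := by
  ext i j
  obtain i | i | i := i <;> obtain j | j | j := j <;>
    simp [blk, Matrix.mul_apply, Fintype.sum_sum_type, Matrix.add_apply] <;> ring

lemma blk_one : (1 : Matrix Idx8 Idx8 ℂ) = blk 1 0 0 0 1 0 0 0 1 := by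
  ext i j
  obtain i | i | i := i <;> obtain j | j | j := j <;>
    simp [blk, Matrix.one_apply, Sum.inl.injEq, Sum.inr.injEq]

lemma blk_add (A11 A13 A31 A33 B11 B13 B31 B33 : Matrix (Fin 2) (Fin 2) ℂ)
    (A12 A32 B12 B32 : Matrix (Fin 2) (Fin 4) ℂ)
    (A21 A23 B21 B23 : Matrix (Fin 4) (Fin 2) ℂ)
    (A22 B22 : Matrix (Fin 4) (Fin 4) ℂ) :
    blk A11 A12 A13 A21 A22 A23 A31 A32 A33 + blk B11 B12 B13 B21 B22 B23 B31 B32 B33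
      = blk (A11+B11) (A12+B12) (A13+B13) (A21+B21) (A22+B22) (A23+B23) (A31+B31) (A32+B32) (A33+B33) := by
  ext i j
  obtain i | i | i := i <;> obtain j | j | j := j <;> simp [blk]

lemma blk_smul (c : ℂ) (A11 A13 A31 A33 : Matrix (Fin 2) (Fin 2) ℂ)
    (A12 A32 : Matrix (Fin 2) (Fin 4) ℂ) (A21 A23 : Matrix (Fin 4) (Fin 2) ℂ)
    (A22 : Matrix (Fin 4) (Fin 4) ℂ) :
    c • blk A11 A12 A13 A21 A22 A23 A31 A32 A33
      = blk (c•A11) (c•A12) (c•A13) (c•A21) (c•A22) (c•A23) (c•A31) (c•A32) (c•A33) := by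
  ext i j
  obtain i | i | i := i <;> obtain j | j | j := j <;> simp [blk]

lemma hasDerivAt_sharp (f fd : ℂ → Matrix (Fin 2) (Fin 4) ℂ)
    (hf : ∀ z i j, HasDerivAt (fun w => f w i j) (fd z i j) z) (z : ℂ) (i : Fin 4) (j : Fin 2) :
    HasDerivAt (fun w => sharp (f w) i j) (sharp (fd z) i j) z := by
  simp only [sharp, Matrix.mul_apply, Matrix.transpose_apply, Finset.sum_mul]
  exact HasDerivAt.fun_sum fun l _ => HasDerivAt.fun_sum fun k _ =>
    (((hf z l k).const_mul (Jmat 4 i k)).mul_const (Jmat 2 l j))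

lemma deriv_Hloop (lam : ℂ) (f fd : ℂ → Matrix (Fin 2) (Fin 4) ℂ)
    (g : ℂ → Matrix (Fin 2) (Fin 2) ℂ)
    (hf : ∀ z i j, HasDerivAt (fun w => f w i j) (fd z i j) z)
    (hg : ∀ z i j, HasDerivAt (fun w => g w i j) ((-(f z * sharp (fd z))) i j) z) (z : ℂ) :
    (Matrix.of fun i j => deriv (fun w => Hloop lam f g w i j) z)
      = lam⁻¹ • blk 0 (fd z) 0 0 0 (-(sharp (fd z))) 0 0 0
        + (lam⁻¹) ^ 2 • blk 0 0 (-(f z * sharp (fd z))) 0 0 0 0 0 0 := by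
  have h1 : ∀ i j, HasDerivAt (fun w => blk 0 (f w) 0 0 0 (-(sharp (f w))) 0 0 0 i j)
      (blk 0 (fd z) 0 0 0 (-(sharp (fd z))) 0 0 0 i j) z := by
    intro i j
    obtain i | i | i := i <;> obtain j | j | j := j <;>
      simp only [blk, Matrix.of_apply, Matrix.zero_apply, Matrix.neg_apply]
    all_goals first
      | exact hasDerivAt_const _ _
      | exact hf z i j
      | exact (hasDerivAt_sharp f fd hf z i j).neg
  have h2 : ∀ i j, HasDerivAt (fun w => blk 0 0 (g w) 0 0 0 0 0 0 i j)
      (blk 0 0 (-(f z * sharp (fd z))) 0 0 0 0 0 0 i j) z := by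
    intro i j
    obtain i | i | i := i <;> obtain j | j | j := j <;>
      simp only [blk, Matrix.of_apply, Matrix.zero_apply]
    all_goals first
      | exact hasDerivAt_const _ _
      | exact hg z i j
  ext i j
  have : HasDerivAt (fun w => Hloop lam f g w i j)
      ((lam⁻¹ • blk 0 (fd z) 0 0 0 (-(sharp (fd z))) 0 0 0
        + (lam⁻¹) ^ 2 • blk 0 0 (-(f z * sharp (fd z))) 0 0 0 0 0 0) i j) z := by
    simp only [Hloop, Matrix.add_apply, Matrix.smul_apply, Matrix.one_apply, smul_eq_mul]
    have := ((hasDerivAt_const z (if i = j then (1:ℂ) else 0)).fun_add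
      ((h1 i j).const_mul lam⁻¹)).fun_add ((h2 i j).const_mul (lam⁻¹ ^ 2))
    simpa using this
  simp [this.deriv]

lemma blk_congr {A11 A13 A31 A33 B11 B13 B31 B33 : Matrix (Fin 2) (Fin 2) ℂ}
    {A12 A32 B12 B32 : Matrix (Fin 2) (Fin 4) ℂ}
    {A21 A23 B21 B23 : Matrix (Fin 4) (Fin 2) ℂ}
    {A22 B22 : Matrix (Fin 4) (Fin 4) ℂ}
    (h11 : A11 = B11) (h12 : A12 = B12) (h13 : A13 = B13)
    (h21 : A21 = B21) (h22 : A22 = B22) (h23 : A23 = B23)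
    (h31 : A31 = B31) (h32 : A32 = B32) (h33 : A33 = B33) :
    blk A11 A12 A13 A21 A22 A23 A31 A32 A33 = blk B11 B12 B13 B21 B22 B23 B31 B32 B33 := by
  rw [h11, h12, h13, h21, h22, h23, h31, h32, h33]


/-- `H⁻¹ dH = λ⁻¹ [[0, f̌, 0], [0, 0, -f̌^♯], [0, 0, 0]] dz`. -/
theorem Hloop_maurer_cartan (lam : ℂ) (hlam : lam ≠ 0)
    (f fd : ℂ → Matrix (Fin 2) (Fin 4) ℂ) (g : ℂ → Matrix (Fin 2) (Fin 2) ℂ)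
    (hf : ∀ z i j, HasDerivAt (fun w => f w i j) (fd z i j) z)
    (hf0 : f 0 = 0)
    (hg : ∀ z i j, HasDerivAt (fun w => g w i j) ((-(f z * sharp (fd z))) i j) z)
    (hg0 : g 0 = 0) :
    ∀ z, (Hloop lam f g z)⁻¹
        * (Matrix.of fun i j => deriv (fun w => Hloop lam f g w i j) z)
      = lam⁻¹ • blk 0 (fd z) 0 0 0 (-(sharp (fd z))) 0 0 0 := by
  intro z
  set K : Matrix Idx8 Idx8 ℂ :=
    blk 1 (-(lam⁻¹ • f z)) (-(lam⁻¹ ^ 2 • (f z * sharp (f z))) - lam⁻¹ ^ 2 • g z)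
      0 1 (lam⁻¹ • sharp (f z)) 0 0 1 with hK
  have hH : Hloop lam f g z
      = blk 1 (lam⁻¹ • f z) (lam⁻¹ ^ 2 • g z) 0 1 (-(lam⁻¹ • sharp (f z))) 0 0 1 := by
    rw [Hloop, blk_one, blk_smul, blk_smul, blk_add, blk_add]
    apply blk_congr <;> first | module | (simp [smul_smul] <;> module)
  have hKH : K * Hloop lam f g z = 1 := by
    rw [hH, hK, blk_mul, blk_one]
    apply blk_congr <;>
      simp only [Matrix.mul_one, Matrix.one_mul, Matrix.mul_zero, Matrix.zero_mul,
        Matrix.neg_mul, Matrix.mul_neg, smul_mul_assoc, mul_smul_comm, sub_mul] <;>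
      first | module | (simp [smul_smul] <;> module)
  have hinv : (Hloop lam f g z)⁻¹ = K := Matrix.inv_eq_left_inv hKH
  rw [hinv, deriv_Hloop lam f fd g hf hg z, hK]
  rw [Matrix.mul_add]
  simp only [blk_smul]
  rw [blk_mul, blk_mul, blk_add]
  apply blk_congr <;>
    simp only [Matrix.mul_one, Matrix.one_mul, Matrix.mul_zero, Matrix.zero_mul,
      Matrix.neg_mul, Matrix.mul_neg, smul_mul_assoc, mul_smul_comm, sub_mul] <;>
    first | module | (simp [smul_smul] <;> module)
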